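/- Let E be a real inner product space, f : E → ℝ a convex differentiable function, and x* a minimizer of f. Fix σ ∈ [0,1), η > 0, A ≥ 0, and points x, z ∈ E. Set a = (η + √(η² + 4ηA))/2 and y = (A/(A+a))·x + (a/(A+a))·z. Suppose x̂ ∈ E satisfies ‖x̂ − y + η·∇f(x̂)‖ ≤ σ‖x̂ − y‖. Define x⁺ = x̂, z⁺ = z − a·∇f(x̂), and A⁺ = A + a. Then A⁺(f(x⁺) − f(x*)) + (1/2)‖z⁺ − x*‖² ≤ A(f(x) − f(x*)) + (1/2)‖z − x*‖² − ((1−σ²)a²/(2η²))‖x̂ − y‖². -/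

import Mathlib

open scoped RealInnerProductSpace

/-- Gradient inequality for a convex differentiable function. -/
lemma grad_ineq {E : Type*} [NormedAddCommGroup E] [InnerProductSpace ℝ E]
    (f : E → ℝ) (g p w : E) (hd : HasFDerivAt f (innerSL ℝ g) p)
    (hconv : ConvexOn ℝ Set.univ f) : ⟪g, w - p⟫ ≤ f w - f p := by
  set φ : ℝ → ℝ := fun t => f (p + t • (w - p)) with hφ
  have hline : ∀ t : ℝ, HasDerivAt (fun s : ℝ => p + s • (w - p)) (w - p) t := by
    intro t
    simpa using ((hasDerivAt_id t).smul_const (w - p)).const_add p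
  have hd' : HasFDerivAt f (innerSL ℝ g) (p + (0:ℝ) • (w - p)) := by simpa using hd
  have hd0 : HasDerivAt φ ⟪g, w - p⟫ 0 := by
    have h0 := hd'.comp_hasDerivAt 0 (hline 0)
    simp at h0
    exact h0
  have hconvφ : ConvexOn ℝ Set.univ φ := by
    have h := hconv.comp_affineMap (AffineMap.lineMap p w : ℝ →ᵃ[ℝ] E)
    have he : ∀ t : ℝ, (AffineMap.lineMap p w : ℝ →ᵃ[ℝ] E) t = p + t • (w - p) := by
      intro t
      simp only [AffineMap.lineMap_apply, vsub_eq_sub, vadd_eq_add]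
      module
    refine ConvexOn.congr (by simpa using h) ?_
    intro t _; simp [Function.comp, he t, hφ]
  have hs := hconvφ.le_slope_of_hasDerivAt (Set.mem_univ 0) (Set.mem_univ 1) zero_lt_one hd0
  have hslope : slope φ 0 1 = f w - f p := by
    simp [slope_def_field, hφ]
  rw [hslope] at hs
  exact hs

set_option maxHeartbeats 1600000 in
theorem stmt0
    {E : Type*} [NormedAddCommGroup E] [InnerProductSpace ℝ E]
    (f : E → ℝ) (gf : E → E)
    (hdiff : ∀ p : E, HasFDerivAt f (innerSL ℝ (gf p)) p)
    (hconv : ConvexOn ℝ Set.univ f)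
    (xstar : E) (hmin : ∀ w : E, f xstar ≤ f w)
    (σ η A : ℝ) (hσ0 : 0 ≤ σ) (hσ1 : σ < 1) (hη : 0 < η) (hA : 0 ≤ A)
    (x z : E)
    (a : ℝ) (ha : a = (η + Real.sqrt (η ^ 2 + 4 * η * A)) / 2)
    (y : E) (hy : y = (A / (A + a)) • x + (a / (A + a)) • z)
    (xhat : E)
    (hxhat : ‖xhat - y + η • gf xhat‖ ≤ σ * ‖xhat - y‖)
    (xplus zplus : E) (Aplus : ℝ)
    (hxplus : xplus = xhat) (hzplus : zplus = z - a • gf xhat)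
    (hAplus : Aplus = A + a) :
    Aplus * (f xplus - f xstar) + (1 / 2) * ‖zplus - xstar‖ ^ 2 ≤
      A * (f x - f xstar) + (1 / 2) * ‖z - xstar‖ ^ 2
        - ((1 - σ ^ 2) * a ^ 2 / (2 * η ^ 2)) * ‖xhat - y‖ ^ 2 := by
  rw [hxplus, hzplus, hAplus]
  set g := gf xhat with hg
  -- basic facts about a
  have hsnn : (0:ℝ) ≤ η ^ 2 + 4 * η * A := by positivity
  have hs2 : Real.sqrt (η ^ 2 + 4 * η * A) ^ 2 = η ^ 2 + 4 * η * A := Real.sq_sqrt hsnn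
  have hsge : η ≤ Real.sqrt (η ^ 2 + 4 * η * A) := by
    have h := Real.sqrt_le_sqrt (show η ^ 2 ≤ η ^ 2 + 4 * η * A by nlinarith)
    rwa [Real.sqrt_sq hη.le] at h
  have haη : η ≤ a := by rw [ha]; linarith
  have hapos : 0 < a := lt_of_lt_of_le hη haη
  have haq : a ^ 2 = η * (A + a) := by
    rw [ha]; nlinarith [hs2]
  have hAapos : 0 < A + a := by linarith
  have hη2 : (0:ℝ) < 2 * η ^ 2 := by positivity
  -- abbreviations
  set P := ⟪g, xhat - x⟫ with hP
  set Q := ⟪g, xhat - xstar⟫ with hQ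
  set R := ⟪g, z - xstar⟫ with hR
  set S := ⟪g, xhat - y⟫ with hS
  set G := ‖g‖ ^ 2 with hG
  set N := ‖xhat - y‖ ^ 2 with hN
  -- convexity inequalities
  have h1 : f xhat - f x ≤ P := by
    have h1' := grad_ineq f g xhat x (hdiff xhat) hconv
    have he : ⟪g, x - xhat⟫ = -P := by rw [hP, ← inner_neg_right]; congr 1; abel
    rw [he] at h1'; linarith
  have h2 : f xhat - f xstar ≤ Q := by
    have h2' := grad_ineq f g xhat xstar (hdiff xhat) hconv
    have he : ⟪g, xstar - xhat⟫ = -Q := by rw [hQ, ← inner_neg_right]; congr 1; abel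
    rw [he] at h2'; linarith
  -- norm expansions
  have hz : ‖z - a • g - xstar‖ ^ 2 = ‖z - xstar‖ ^ 2 - 2 * a * R + a ^ 2 * G := by
    have heq : z - a • g - xstar = (z - xstar) - a • g := by abel
    rw [heq, norm_sub_sq_real, hR, hG, real_inner_smul_right, norm_smul,
      real_inner_comm (z - xstar) g]
    simp only [Real.norm_eq_abs, mul_pow, sq_abs]
    ring
  have hn : ‖xhat - y + η • g‖ ^ 2 = N + 2 * η * S + η ^ 2 * G := by
    rw [norm_add_sq_real, hS, hG, hN, real_inner_smul_right, norm_smul,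
      real_inner_comm (xhat - y) g]
    simp only [Real.norm_eq_abs, mul_pow, sq_abs]
    ring
  -- contraction inequality squared
  have hsq : ‖xhat - y + η • g‖ ^ 2 ≤ σ ^ 2 * N := by
    have h := pow_le_pow_left₀ (norm_nonneg _) hxhat 2
    calc ‖xhat - y + η • g‖ ^ 2 ≤ (σ * ‖xhat - y‖) ^ 2 := h
      _ = σ ^ 2 * N := by rw [mul_pow, hN]
  -- combination identity from y
  have hyc : (A + a) • (xhat - y) = A • (xhat - x) + a • (xhat - z) := by
    have hAy : (A + a) • y = A • x + a • z := by
      rw [hy, smul_add, smul_smul, smul_smul,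
        mul_div_cancel₀ _ (ne_of_gt hAapos), mul_div_cancel₀ _ (ne_of_gt hAapos)]
    rw [smul_sub, hAy, smul_sub, smul_sub, add_smul]
    abel
  have hcomb : (A + a) * S = A * P + a * (Q - R) := by
    have h3 : ⟪g, (A + a) • (xhat - y)⟫ = ⟪g, A • (xhat - x) + a • (xhat - z)⟫ := by
      rw [hyc]
    rw [inner_smul_right, inner_add_right, inner_smul_right, inner_smul_right] at h3
    have h4 : ⟪g, xhat - z⟫ = Q - R := by
      rw [hQ, hR, ← inner_sub_right]; congr 1; abel
    rw [h4] at h3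
    linarith [h3]
  -- key algebraic identity
  have hkey : 2 * η ^ 2 * ((A + a) * S + a ^ 2 * G / 2) = a ^ 2 * (2 * η * S + η ^ 2 * G) := by
    linear_combination (-(2 * η * S)) * haq
  have hmul : a ^ 2 * (N + 2 * η * S + η ^ 2 * G) ≤ a ^ 2 * (σ ^ 2 * N) := by
    rw [← hn]; exact mul_le_mul_of_nonneg_left hsq (sq_nonneg a)
  have hfin : 2 * η ^ 2 * ((A + a) * S + a ^ 2 * G / 2) ≤ (σ ^ 2 - 1) * (a ^ 2 * N) := by
    rw [hkey]; nlinarith [hmul]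
  have h5 : 2 * η ^ 2 * (-(((1 - σ ^ 2) * a ^ 2 / (2 * η ^ 2)) * N)) = (σ ^ 2 - 1) * (a ^ 2 * N) := by
    field_simp; ring
  have hfin2 : (A + a) * S + a ^ 2 * G / 2 ≤ -(((1 - σ ^ 2) * a ^ 2 / (2 * η ^ 2)) * N) :=
    le_of_mul_le_mul_left (by rw [h5]; exact hfin) hη2
  have hA1 : A * (f xhat - f x) ≤ A * P := mul_le_mul_of_nonneg_left h1 hA
  have ha2 : a * (f xhat - f xstar) ≤ a * Q := mul_le_mul_of_nonneg_left h2 hapos.le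
  rw [hz]
  linarith [hA1, ha2, hcomb, hfin2]
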